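/- For a Hopf algebra H over a commutative ring, the map δ_n (defined as δ_{\{1,...,n\}} via inclusion-exclusion over Δ_E) satisfies δ_n = (id − unit∘ε)^{⊗n} ∘ Δⁿ for every n ≥ 1. -/

import Mathlib

/- STATEMENT 1: For a Hopf algebra H over a commutative ring, the map δ_n
(defined as δ_{{1,...,n}} via inclusion-exclusion over Δ_E) satisfies
δ_n = (id − unit∘ε)^{⊗n} ∘ Δⁿ for every n ≥ 1. -/

open TensorProduct

noncomputable section

universe u

/-- A bundled `R`-algebra, used to form iterated tensor powers. -/
structure AlgB (R : Type u) [CommRing R] : Type (u + 1) where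
  X : Type u
  [ring : Ring X]
  [alg : Algebra R X]

attribute [instance] AlgB.ring AlgB.alg

section Mach

variable (R H : Type u) [CommRing R] [Ring H] [Algebra R H]

/-- The `n`-th tensor power `H^{⊗ n}` (with `H^{⊗ 0} = R`, `H^{⊗ 1} = H`). -/
def Tpow : ℕ → AlgB R
  | 0 => ⟨R⟩
  | 1 => ⟨H⟩
  | n + 2 => ⟨H ⊗[R] (Tpow (n + 1)).X⟩

/-- Apply a linear endomorphism of `H` in each tensor slot. -/
def tmap : (n : ℕ) → (Fin n → (H →ₗ[R] H)) → ((Tpow R H n).X →ₗ[R] (Tpow R H n).X)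
  | 0, _ => LinearMap.id
  | 1, f => f 0
  | n + 2, f => TensorProduct.map (f 0) (tmap (n + 1) fun i => f i.succ)

/-- The iterated coproduct `Δⁿ : H → H^{⊗ n}`, with `Δ⁰ = ε`, `Δ¹ = id`. -/
def Dit (cu : H →ₗ[R] R) (cm : H →ₗ[R] H ⊗[R] H) : (n : ℕ) → H →ₗ[R] (Tpow R H n).X
  | 0 => cu
  | 1 => LinearMap.id
  | n + 2 => (TensorProduct.map LinearMap.id (Dit cu cm (n + 1))) ∘ₗ cm

/-- `unit ∘ ε : H → H`. -/
def uem (cu : H →ₗ[R] R) : H →ₗ[R] H := (Algebra.linearMap R H) ∘ₗ cu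

/-- `Δ_E : H → H^{⊗ n}`: the iterated coproduct inserted into the slots of `E`,
with units (`unit ∘ ε`) in the slots outside `E`. -/
def DeltaE (cu : H →ₗ[R] R) (cm : H →ₗ[R] H ⊗[R] H) (n : ℕ) (E : Finset (Fin n)) :
    H →ₗ[R] (Tpow R H n).X :=
  (tmap R H n fun i => if i ∈ E then LinearMap.id else uem R H cu) ∘ₗ Dit R H cu cm n

/-- `δ_E := Σ_{E' ⊆ E} (-1)^{|E| - |E'|} Δ_{E'}`. -/
def deltaE (cu : H →ₗ[R] R) (cm : H →ₗ[R] H ⊗[R] H) (n : ℕ) (E : Finset (Fin n)) :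
    H →ₗ[R] (Tpow R H n).X :=
  ∑ E' ∈ E.powerset, ((-1 : ℤ) ^ (E.card - E'.card)) • DeltaE R H cu cm n E'

end Mach



variable {R : Type u} [CommRing R] {M N P Q : Type u}
    [AddCommGroup M] [AddCommGroup N] [AddCommGroup P] [AddCommGroup Q]
    [Module R M] [Module R N] [Module R P] [Module R Q]

private def mapRightHom (f : M →ₗ[R] P) :
    (N →ₗ[R] Q) →+ (M ⊗[R] N →ₗ[R] P ⊗[R] Q) :=
  AddMonoidHom.mk' (fun g : N →ₗ[R] Q => TensorProduct.map f g)
    (fun g₁ g₂ => TensorProduct.map_add_right f g₁ g₂)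

private lemma mapRightHom_apply (f : M →ₗ[R] P) (g : N →ₗ[R] Q) :
    mapRightHom f g = TensorProduct.map f g := rfl

private lemma tpmap_zsmul_right (f : M →ₗ[R] P) (c : ℤ) (g : N →ₗ[R] Q) :
    TensorProduct.map f (c • g) = c • TensorProduct.map f g := by
  rw [← mapRightHom_apply, ← mapRightHom_apply]
  exact map_zsmul (mapRightHom f) c g

private lemma tpmap_sum_right {ι : Type*} (s : Finset ι) (f : M →ₗ[R] P) (g : ι → (N →ₗ[R] Q)) :
    TensorProduct.map f (∑ i ∈ s, g i) = ∑ i ∈ s, TensorProduct.map f (g i) := by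
  simp only [← mapRightHom_apply]
  exact map_sum (mapRightHom f) g s

private def mapLeftHom (g : N →ₗ[R] Q) :
    (M →ₗ[R] P) →+ (M ⊗[R] N →ₗ[R] P ⊗[R] Q) :=
  AddMonoidHom.mk' (fun f : M →ₗ[R] P => TensorProduct.map f g)
    (fun f₁ f₂ => TensorProduct.map_add_left f₁ f₂ g)

private lemma comp_sum_left {ι : Type*} {W : Type u} [AddCommGroup W] [Module R W]
    (s : Finset ι) (f : ι → (M →ₗ[R] P)) (g : W →ₗ[R] M) :
    (∑ i ∈ s, f i) ∘ₗ g = ∑ i ∈ s, (f i ∘ₗ g) := by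
  ext x
  simp [LinearMap.sum_apply]

private lemma tpmap_sub_left (f₁ f₂ : M →ₗ[R] P) (g : N →ₗ[R] Q) :
    TensorProduct.map (f₁ - f₂) g = TensorProduct.map f₁ g - TensorProduct.map f₂ g :=
  (mapLeftHom g).map_sub f₁ f₂


section Aux
variable (R H : Type u) [CommRing R] [Ring H] [Algebra R H]

lemma tmap_sub_expand : ∀ (n : ℕ) (f g : Fin n → (H →ₗ[R] H)),
    tmap R H n (fun i => f i - g i) =
      ∑ s : Fin n → Bool,
        ((-1 : ℤ) ^ (Finset.univ.filter (fun i => s i = false)).card) •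
          tmap R H n (fun i => if s i then f i else g i)
  | 0, f, g => by
    rw [Fintype.sum_eq_single (fun i : Fin 0 => true)]
    · simp [tmap]
    · intro s hs
      exact absurd (funext fun i => i.elim0) hs
  | 1, f, g => by
    rw [← Equiv.sum_comp (Equiv.funUnique (Fin 1) Bool).symm, Fintype.sum_bool]
    show tmap R H 1 _ = _ • tmap R H 1 _ + _ • tmap R H 1 _
    simp [tmap, Equiv.funUnique, sub_eq_add_neg]
    exact (by rw [one_smul, neg_one_zsmul] : f 0 + -g 0 = (1 : ℤ) • f 0 + (-1 : ℤ) • g 0)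
  | (n + 2), f, g => by
    have key := tmap_sub_expand (n + 1) (fun i => f i.succ) (fun i => g i.succ)
    rw [← Equiv.sum_comp (Fin.consEquiv fun _ : Fin (n + 2) => Bool), Fintype.sum_prod_type]
    have hcard : ∀ (b : Bool) (t : Fin (n + 1) → Bool),
        (Finset.univ.filter (fun i => Fin.cons (α := fun _ => Bool) b t i = false)).card =
          (if b then 0 else 1) + (Finset.univ.filter (fun i => t i = false)).card := by
      intro b t
      rw [Finset.card_filter, Finset.card_filter, Fin.sum_univ_succ]
      cases b <;> simp [Fin.cons_zero, Fin.cons_succ]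
    have htmap : ∀ (b : Bool) (t : Fin (n + 1) → Bool),
        tmap R H (n + 2) (fun i => if Fin.cons (α := fun _ => Bool) b t i then f i else g i) =
          TensorProduct.map (if b then f 0 else g 0)
            (tmap R H (n + 1) (fun i => if t i then f i.succ else g i.succ)) := by
      intro b t
      show TensorProduct.map _ _ = _
      simp only [Fin.cons_zero, Fin.cons_succ]
    have hc : ∀ p : Bool × (Fin (n + 1) → Bool),
        (Fin.consEquiv fun _ : Fin (n + 2) => Bool) p = Fin.cons (α := fun _ => Bool) p.1 p.2 := fun _ => rfl
    simp only [hc, Fintype.sum_bool, hcard, htmap, if_true, Bool.false_eq_true, if_false,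
      pow_add, pow_zero, pow_one, one_mul, mul_smul, neg_one_zsmul]
    rw [← Finset.sum_add_distrib]
    rw [show tmap R H (n + 2) (fun i => f i - g i) =
        TensorProduct.map (f 0 - g 0) (tmap R H (n + 1) fun i => f i.succ - g i.succ) from rfl,
      key, tpmap_sub_left, tpmap_sum_right, tpmap_sum_right, ← Finset.sum_sub_distrib]
    refine Finset.sum_congr rfl fun t _ => ?_
    rw [tpmap_zsmul_right, tpmap_zsmul_right]
    rw [sub_eq_add_neg]
    have h : ∀ (a : ℤ) (X Y : H ⊗[R] (Tpow R H (n + 1)).X →ₗ[R] H ⊗[R] (Tpow R H (n + 1)).X),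
        a • X + -(a • Y) = a • X + (-1 * a) • Y := fun a X Y => by rw [mul_smul, neg_one_zsmul]
    exact h _ _ _

end Aux


/-- `δ_n = (id − unit∘ε)^{⊗ n} ∘ Δⁿ` for all `n ≥ 1`. -/
theorem statement1 (R H : Type u) [CommRing R] [Ring H] [HopfAlgebra R H]
    (n : ℕ) (hn : 1 ≤ n) :
    deltaE R H Coalgebra.counit Coalgebra.comul n Finset.univ =
      (tmap R H n fun _ => LinearMap.id - uem R H Coalgebra.counit) ∘ₗ
        Dit R H Coalgebra.counit Coalgebra.comul n := by
  simp only [deltaE, DeltaE, ← LinearMap.smul_comp]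
  rw [← comp_sum_left]
  congr 1
  have expand := tmap_sub_expand R H n (fun _ => LinearMap.id) (fun _ => uem R H Coalgebra.counit)
  rw [show (fun _ : Fin n => LinearMap.id - uem R H Coalgebra.counit) =
      (fun i : Fin n => (fun _ : Fin n => (LinearMap.id : H →ₗ[R] H)) i -
        (fun _ : Fin n => uem R H Coalgebra.counit) i) from rfl, expand, Finset.powerset_univ]
  refine Fintype.sum_bijective (fun E : Finset (Fin n) => fun i => decide (i ∈ E)) ?_ _ _ ?_
  · constructor
    · intro E E' h
      ext i
      simpa using congrFun h i
    · intro s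
      exact ⟨Finset.univ.filter (fun i => s i = true), by funext i; simp⟩
  · intro E
    have h1 : (Finset.univ.filter (fun i : Fin n => decide (i ∈ E) = false)) = Finset.univ \ E := by
      ext i; simp
    have h2 : (Finset.univ : Finset (Fin n)).card - E.card =
        (Finset.univ.filter (fun i : Fin n => decide (i ∈ E) = false)).card := by
      rw [h1, Finset.card_sdiff_of_subset (Finset.subset_univ E)]
    rw [h2]
    simp only [decide_eq_true_eq]

end
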